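/- Let t be a real random variable on a probability space, let (Z, μ_Z) be a probability space, and let A, B : Z → ℝ be integrable with a := ∫|A| dμ_Z > 0 and b := ∫|B| dμ_Z. Then for every c > 0 and β > 0, P( μ_Z({z : A(z)·t + B(z) ≥ c}) ≥ β ) ≤ P( |t| ≥ (β·c − b)/a ). In particular, if the CDF F of |t| is continuous, the right-hand side equals 1 − F((β·c − b)/a). -/

import Mathlib

open MeasureTheory

/-- False-positive-rate bound in the proof of Lemma 2: with `a = ∫|A| > 0`, `b = ∫|B|`,
`P(μ_Z({z : A(z)·t + B(z) ≥ c}) ≥ β) ≤ P(|t| ≥ (β·c − b)/a)`, and if the CDF `F` of `|t|`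
is continuous then the right-hand side equals `1 − F((β·c − b)/a)`. -/
theorem stmt_10 {Ω Z : Type*} [MeasurableSpace Ω] [MeasurableSpace Z]
    (P : Measure Ω) [IsProbabilityMeasure P] (μZ : Measure Z) [IsProbabilityMeasure μZ]
    (t : Ω → ℝ) (ht : Measurable t)
    (A B : Z → ℝ) (hA : Integrable A μZ) (hB : Integrable B μZ)
    (a b : ℝ) (ha : a = ∫ z, |A z| ∂μZ) (hb : b = ∫ z, |B z| ∂μZ) (hapos : 0 < a)
    (c β : ℝ) (hc : 0 < c) (hβ : 0 < β) :
    P {ω | (μZ {z | A z * t ω + B z ≥ c}).toReal ≥ β} ≤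
        P {ω | |t ω| ≥ (β * c - b) / a} ∧
      ∀ F : ℝ → ℝ, (∀ v, F v = (P {ω | |t ω| ≤ v}).toReal) → Continuous F →
        (P {ω | |t ω| ≥ (β * c - b) / a}).toReal = 1 - F ((β * c - b) / a) := by
  set v : ℝ := (β * c - b) / a with hv
  constructor
  · apply measure_mono
    intro ω hω
    simp only [Set.mem_setOf_eq] at hω ⊢
    set T := t ω with hT
    have hint : Integrable (fun z => |A z * T + B z|) μZ := ((hA.mul_const T).add hB).abs
    have hmark : c * (μZ {z | c ≤ |A z * T + B z|}).toReal ≤ ∫ z, |A z * T + B z| ∂μZ :=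
      mul_meas_ge_le_integral_of_nonneg (Filter.Eventually.of_forall fun z => abs_nonneg _)
        hint c
    have hsub : {z | A z * T + B z ≥ c} ⊆ {z | c ≤ |A z * T + B z|} := fun z hz =>
      show c ≤ |A z * T + B z| from le_trans hz (le_abs_self _)
    have h1 : (μZ {z | A z * T + B z ≥ c}).toReal ≤ (μZ {z | c ≤ |A z * T + B z|}).toReal :=
      ENNReal.toReal_mono (measure_ne_top _ _) (measure_mono hsub)
    have h2 : ∫ z, |A z * T + B z| ∂μZ ≤ |T| * a + b := by
      have hbd : ∀ z, |A z * T + B z| ≤ |T| * |A z| + |B z| := fun z => by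
        calc |A z * T + B z| ≤ |A z * T| + |B z| := abs_add_le _ _
          _ = |T| * |A z| + |B z| := by rw [abs_mul]; ring
      calc ∫ z, |A z * T + B z| ∂μZ ≤ ∫ z, (|T| * |A z| + |B z|) ∂μZ :=
            integral_mono hint ((hA.abs.const_mul _).add hB.abs) hbd
        _ = |T| * a + b := by
            rw [integral_add (hA.abs.const_mul _) hB.abs, integral_const_mul, ha, hb]
    have hkey : β * c ≤ |T| * a + b := by nlinarith
    rw [ge_iff_le, hv, div_le_iff₀ hapos]
    linarith
  · intro F hF hFc
    have hmeas : Measurable fun ω => |t ω| := ht.abs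
    -- no atom at v
    have hatom : P {ω | |t ω| = v} = 0 := by
      set S : ℕ → Set Ω := fun n => {ω | v - 1 / (n + 1) < |t ω| ∧ |t ω| ≤ v} with hS
      have hSm : ∀ n, MeasurableSet (S n) := fun n =>
        (measurableSet_lt measurable_const hmeas).inter (measurableSet_le hmeas measurable_const)
      have hanti : Antitone S := by
        intro m n hmn ω hω
        refine ⟨lt_of_le_of_lt ?_ hω.1, hω.2⟩
        have : (1 : ℝ) / (n + 1) ≤ 1 / (m + 1) := by
          apply one_div_le_one_div_of_le (by positivity)
          exact_mod_cast add_le_add_left (Nat.cast_le.mpr hmn) 1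
        linarith
      have hInter : (⋂ n, S n) = {ω | |t ω| = v} := by
        ext ω
        simp only [Set.mem_iInter, hS, Set.mem_setOf_eq]
        constructor
        · intro h
          have hle : |t ω| ≤ v := (h 0).2
          refine le_antisymm hle ?_
          by_contra hlt
          push_neg at hlt
          obtain ⟨n, hn⟩ := exists_nat_one_div_lt (sub_pos.mpr hlt)
          have := (h n).1
          linarith
        · intro h n
          constructor
          · rw [h]; have : (0:ℝ) < 1 / (n + 1) := by positivity
            linarith
          · rw [h]
      have htend : Filter.Tendsto (fun n => P (S n)) Filter.atTop (nhds (P {ω | |t ω| = v})) := by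
        rw [← hInter]
        exact tendsto_measure_iInter_atTop (fun n => (hSm n).nullMeasurableSet) hanti
          ⟨0, measure_ne_top _ _⟩
      -- P (S n) = measure{≤v} - measure{≤ v - 1/(n+1)}
      have hdiff : ∀ n : ℕ, (P (S n)).toReal = F v - F (v - 1 / (n + 1)) := by
        intro n
        have hset : S n = {ω | |t ω| ≤ v} \ {ω | |t ω| ≤ v - 1 / (n + 1)} := by
          ext ω
          simp only [hS, Set.mem_setOf_eq, Set.mem_diff, not_le]
          tauto
        have hsub2 : {ω | |t ω| ≤ v - 1 / (n + 1)} ⊆ {ω | |t ω| ≤ v} := by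
          intro ω h
          simp only [Set.mem_setOf_eq] at h ⊢
          have : (0:ℝ) < 1 / ((n:ℝ) + 1) := by positivity
          linarith
        rw [hset, measure_diff hsub2
            (measurableSet_le hmeas measurable_const).nullMeasurableSet (measure_ne_top _ _),
          ENNReal.toReal_sub_of_le (measure_mono hsub2) (measure_ne_top _ _),
          hF, hF]
      have htendR : Filter.Tendsto (fun n : ℕ => F v - F (v - 1 / (n + 1)))
          Filter.atTop (nhds 0) := by
        have h1 : Filter.Tendsto (fun n : ℕ => v - 1 / (n + 1)) Filter.atTop (nhds v) := by
          have : Filter.Tendsto (fun n : ℕ => 1 / ((n : ℝ) + 1)) Filter.atTop (nhds 0) :=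
            tendsto_one_div_add_atTop_nhds_zero_nat
          simpa using (tendsto_const_nhds (x := v)).sub this
        have := (hFc.tendsto v).comp h1
        simpa using (tendsto_const_nhds (x := F v)).sub this
      have htendR' : Filter.Tendsto (fun n => (P (S n)).toReal) Filter.atTop (nhds 0) := by
        simpa [hdiff] using htendR
      have htend2 : Filter.Tendsto (fun n => (P (S n)).toReal) Filter.atTop
          (nhds (P {ω | |t ω| = v}).toReal) :=
        (ENNReal.tendsto_toReal (measure_ne_top _ _)).comp htend
      have h0 : (P {ω | |t ω| = v}).toReal = 0 := tendsto_nhds_unique htend2 htendR'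
      exact (ENNReal.toReal_eq_zero_iff _).mp h0 |>.resolve_right (measure_ne_top _ _)
    -- now compute
    have hcompl : {ω | |t ω| ≥ v} = {ω | |t ω| < v}ᶜ := by
      ext ω; simp [not_lt]
    have hlt_union : {ω | |t ω| ≤ v} = {ω | |t ω| < v} ∪ {ω | |t ω| = v} := by
      ext ω; simp only [Set.mem_setOf_eq, Set.mem_union]; exact le_iff_lt_or_eq
    have hle_eq : P {ω | |t ω| < v} = P {ω | |t ω| ≤ v} := by
      rw [hlt_union]
      refine le_antisymm (measure_mono Set.subset_union_left) ?_
      calc P ({ω | |t ω| < v} ∪ {ω | |t ω| = v})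
          ≤ P {ω | |t ω| < v} + P {ω | |t ω| = v} := measure_union_le _ _
        _ = P {ω | |t ω| < v} := by rw [hatom, add_zero]
    have hge : P {ω | |t ω| ≥ v} = 1 - P {ω | |t ω| ≤ v} := by
      rw [hcompl, measure_compl (measurableSet_lt hmeas measurable_const) (measure_ne_top _ _),
        hle_eq, measure_univ]
    rw [hge, ENNReal.toReal_sub_of_le prob_le_one ENNReal.one_ne_top, ENNReal.toReal_one, hF]
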